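/- arXiv:0704.1046 — 2 statements merged into one kernel-verified Lean document; each statement's English description precedes it below -/
import Mathlib

section
/- Let n, r ∈ ℕ with 1 ≤ r ≤ n, let N ∈ ℕ and C > 0. Let Ω = {z ∈ ℂⁿ : |z_k| < e^{-1} for all k, and z_k ≠ 0 for all k < r}. Let f : ℂⁿ → ℂ be real Fréchet differentiable at every point of Ω, and suppose that for every z ∈ Ω the following derivative bounds hold, where e_k denotes the k-th standard basis vector and Df(z) the real Fréchet derivative: for every k < r and for both directions v = e_k and v = i·e_k, ‖Df(z)(v)‖ ≤ C · (∏_{j<r} (log log(1/|z_j|))^N) / (|z_k| · log(1/|z_k|)); and for every k with r ≤ k < n and both directions v = e_k and v = i·e_k, ‖Df(z)(v)‖ ≤ C · ∏_{j<r} (log log(1/|z_j|))^N. Then for every ε ∈ (0,1) there exists a constant C' > 0 such that for every w ∈ Ω with |w_k| ≤ ε·e^{-1} for all k, one has |f(w)| ≤ C' · ∑_{i<r} (log log(1/|w_i|))^{N+1} · ∏_{i<j<r} (log log(1/|w_j|))^N. -/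
open Finset

/-- The punctured polydisc: points of the open polydisc of polyradius `e⁻¹` in `ℂⁿ`
avoiding the first `r` coordinate hyperplanes. -/
def puncturedPolydisc (n r : ℕ) : Set (Fin n → ℂ) :=
  {z | (∀ k, ‖z k‖ < Real.exp (-1)) ∧ ∀ k : Fin n, (k : ℕ) < r → z k ≠ 0}

lemma log_one_div_gt_one {t : ℝ} (ht : 0 < t) (ht' : t < Real.exp (-1)) :
    1 < Real.log (1/t) := by
  rw [one_div, Real.log_inv]
  have : Real.log t < -1 := (Real.log_lt_iff_lt_exp ht).2 (by simpa using ht')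
  linarith

lemma loglog_pos {t : ℝ} (ht : 0 < t) (ht' : t < Real.exp (-1)) :
    0 < Real.log (Real.log (1/t)) := Real.log_pos (log_one_div_gt_one ht ht')

lemma loglog_anti {s t : ℝ} (hs : 0 < s) (hst : s ≤ t) (ht : t < Real.exp (-1)) :
    Real.log (Real.log (1/t)) ≤ Real.log (Real.log (1/s)) := by
  have ht0 : 0 < t := hs.trans_le hst
  have h1 : Real.log (1/t) ≤ Real.log (1/s) :=
    Real.log_le_log (by positivity) (one_div_le_one_div_of_le hs hst)
  exact Real.log_le_log (lt_trans one_pos (log_one_div_gt_one ht0 ht)) h1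

lemma hasDerivAt_loglog_pow (N : ℕ) {t : ℝ} (ht : 0 < t) (ht' : t < Real.exp (-1)) :
    HasDerivAt (fun s => Real.log (Real.log (1/s)) ^ (N+1))
      (-((N+1) * Real.log (Real.log (1/t)) ^ N / (t * Real.log (1/t)))) t := by
  have hlt : 1 < Real.log (1/t) := log_one_div_gt_one ht ht'
  have heq : (fun s : ℝ => Real.log (1/s)) = fun s => -Real.log s := by
    funext s; rw [one_div, Real.log_inv]
  have h1 : HasDerivAt (fun s : ℝ => Real.log (1/s)) (-t⁻¹) t := by
    rw [heq]; exact (Real.hasDerivAt_log ht.ne').neg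
  have h2 : HasDerivAt (fun s : ℝ => Real.log (Real.log (1/s)))
      ((Real.log (1/t))⁻¹ * -t⁻¹) t :=
    (Real.hasDerivAt_log (by linarith)).comp t h1
  have h3 := h2.pow (N+1)
  refine h3.congr_deriv ?_
  have h4 : Real.log (1/t) ≠ 0 := by linarith
  simp only [Nat.add_sub_cancel]
  field_simp
  push_cast; ring

lemma hasDerivAt_update_mul (n : ℕ) (w : Fin n → ℂ) (k : Fin n) (u : ℂ) (t : ℝ) :
    HasDerivAt (fun s : ℝ => Function.update w k ((s:ℂ) * u)) (Pi.single k u) t := by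
  have hc : HasDerivAt (fun s : ℝ => (s:ℂ) * u) u t := by
    simpa using ((hasDerivAt_id t).ofReal_comp).mul_const u
  have h := (hasFDerivAt_update (𝕜 := ℝ) (i := k) w ((t:ℂ) * u)).comp_hasDerivAt t hc
  have e : (Pi.single k u : Fin n → ℂ)
      = (ContinuousLinearMap.pi (Pi.single k (ContinuousLinearMap.id ℝ ℂ))) u := by
    ext j
    rcases eq_or_ne j k with rfl | hj
    · simp
    · simp [Pi.single_apply, hj]
  rw [e]; exact h

lemma key_step (n r : ℕ) (N : ℕ) (C : ℝ) (hC : 0 < C)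
    (f : (Fin n → ℂ) → ℂ)
    (hdiff : ∀ z ∈ puncturedPolydisc n r, DifferentiableAt ℝ f z)
    (hbound₁ : ∀ z ∈ puncturedPolydisc n r, ∀ k : Fin n, (k : ℕ) < r →
      ∀ v : Fin n → ℂ, v = Pi.single k 1 ∨ v = Pi.single k Complex.I →
        ‖fderiv ℝ f z v‖ ≤
          C * (∏ j ∈ univ.filter (fun j : Fin n => (j : ℕ) < r),
                (Real.log (Real.log (1 / ‖z j‖))) ^ N) /
            (‖z k‖ * Real.log (1 / ‖z k‖)))
    (b : ℝ) (hb0 : 0 < b) (hb1 : b < Real.exp (-1))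
    (w : Fin n → ℂ) (hw : w ∈ puncturedPolydisc n r)
    (hwb : ∀ j, ‖w j‖ ≤ b)
    (k : Fin n) (hk : (k : ℕ) < r) :
    ‖f (Function.update w k (((b / ‖w k‖ : ℝ) : ℂ) * w k)) - f w‖ ≤
      (2*C/(N+1)) * ((∏ j ∈ univ.filter (fun j : Fin n => (j:ℕ) < r ∧ j ≠ k),
          Real.log (Real.log (1/‖w j‖)) ^ N) *
        Real.log (Real.log (1/‖w k‖)) ^ (N+1)) := by
  set a := ‖w k‖ with ha_def
  have hwk0 : w k ≠ 0 := hw.2 k hk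
  have ha0 : 0 < a := norm_pos_iff.2 hwk0
  have hab : a ≤ b := hwb k
  set u : ℂ := ((a⁻¹ : ℝ) : ℂ) * w k with hu_def
  have hu1 : ‖u‖ = 1 := by
    rw [hu_def, norm_mul, Complex.norm_real, Real.norm_eq_abs, ← ha_def, abs_of_pos (inv_pos.2 ha0),
      inv_mul_cancel₀ ha0.ne']
  set z : ℝ → (Fin n → ℂ) := fun t => Function.update w k ((t:ℂ) * u) with hz_def
  have hza : z a = w := by
    have : ((a:ℂ)) * u = w k := by
      rw [hu_def, ← mul_assoc, ← Complex.ofReal_mul, mul_inv_cancel₀ ha0.ne',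
        Complex.ofReal_one, one_mul]
    simp [hz_def, this]
  have hzb : z b = Function.update w k (((b / a : ℝ) : ℂ) * w k) := by
    simp only [hz_def]
    congr 1
    rw [hu_def, ← mul_assoc, ← Complex.ofReal_mul, div_eq_mul_inv]
  -- facts about z t
  have hztj : ∀ t : ℝ, ∀ j : Fin n, j ≠ k → z t j = w j := by
    intro t j hj; simp [hz_def, Function.update_of_ne hj]
  have hztk : ∀ t : ℝ, 0 ≤ t → ‖z t k‖ = t := by
    intro t ht
    simp [hz_def, norm_mul, Complex.norm_real, abs_of_nonneg ht, hu1]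
  have hmem : ∀ t ∈ Set.Icc a b, z t ∈ puncturedPolydisc n r := by
    intro t ht
    have ht0 : 0 < t := lt_of_lt_of_le ha0 ht.1
    constructor
    · intro j
      rcases eq_or_ne j k with rfl | hj
      · rw [hztk t ht0.le]; exact lt_of_le_of_lt ht.2 hb1
      · rw [hztj t j hj]; exact hw.1 j
    · intro j hjr
      rcases eq_or_ne j k with rfl | hj
      · intro h0
        have := hztk t ht0.le
        rw [h0] at this; simp at this; linarith
      · rw [hztj t j hj]; exact hw.2 j hjr
  set P : ℝ := ∏ j ∈ univ.filter (fun j : Fin n => (j:ℕ) < r ∧ j ≠ k),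
      Real.log (Real.log (1/‖w j‖)) ^ N with hP_def
  have hP0 : 0 ≤ P := Finset.prod_nonneg (fun j hj => by
    simp only [Finset.mem_filter] at hj
    exact pow_nonneg (loglog_pos (norm_pos_iff.2 (hw.2 j hj.2.1)) (hw.1 j)).le N)
  have hsplit : ∀ t ∈ Set.Icc a b,
      ∏ j ∈ univ.filter (fun j : Fin n => (j:ℕ) < r),
        Real.log (Real.log (1/‖z t j‖)) ^ N
      = Real.log (Real.log (1/t)) ^ N * P := by
    intro t ht
    have ht0 : 0 < t := lt_of_lt_of_le ha0 ht.1
    have hkmem : k ∈ univ.filter (fun j : Fin n => (j:ℕ) < r) := by simp [hk]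
    rw [← Finset.mul_prod_erase _ _ hkmem]
    congr 1
    · rw [hztk t ht0.le]
    · have herase : (univ.filter (fun j : Fin n => (j:ℕ) < r)).erase k
          = univ.filter (fun j : Fin n => (j:ℕ) < r ∧ j ≠ k) := by
        ext j
        simp only [Finset.mem_erase, Finset.mem_filter, Finset.mem_univ, true_and]
        tauto
      rw [herase, hP_def]
      refine Finset.prod_congr rfl (fun j hj => ?_)
      simp only [Finset.mem_filter] at hj
      rw [hztj t j hj.2.2]
  have hg' : ∀ t ∈ Set.Icc a b,
      HasDerivAt (fun s => f (z s)) ((fderiv ℝ f (z t)) (Pi.single k u)) t := by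
    intro t ht
    exact ((hdiff (z t) (hmem t ht)).hasFDerivAt).comp_hasDerivAt t
      (hasDerivAt_update_mul n w k u t)
  have hdecomp : Pi.single k u = u.re • (Pi.single k (1:ℂ) : Fin n → ℂ)
      + u.im • (Pi.single k Complex.I : Fin n → ℂ) := by
    ext j
    rcases eq_or_ne j k with rfl | hj
    · simp [Complex.real_smul, Complex.re_add_im]
    · simp [Pi.single_apply, hj]
  have hDbound : ∀ t ∈ Set.Icc a b,
      ‖(fderiv ℝ f (z t)) (Pi.single k u)‖ ≤
        2 * C * P * Real.log (Real.log (1/t)) ^ N / (t * Real.log (1/t)) := by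
    intro t ht
    have ht0 : 0 < t := lt_of_lt_of_le ha0 ht.1
    have hte : t < Real.exp (-1) := lt_of_le_of_lt ht.2 hb1
    have hmemt := hmem t ht
    have h1 := hbound₁ (z t) hmemt k hk (Pi.single k 1) (Or.inl rfl)
    have h2 := hbound₁ (z t) hmemt k hk (Pi.single k Complex.I) (Or.inr rfl)
    rw [hztk t ht0.le, hsplit t ht] at h1 h2
    have hre : |u.re| ≤ 1 := (Complex.abs_re_le_norm u).trans hu1.le
    have him : |u.im| ≤ 1 := (Complex.abs_im_le_norm u).trans hu1.le
    have key : (fderiv ℝ f (z t)) (Pi.single k u)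
        = u.re • (fderiv ℝ f (z t)) (Pi.single k 1)
          + u.im • (fderiv ℝ f (z t)) (Pi.single k Complex.I) := by
      rw [hdecomp]; simp
    rw [key]
    set A := (fderiv ℝ f (z t)) (Pi.single k (1:ℂ)) with hA
    set B := (fderiv ℝ f (z t)) (Pi.single k Complex.I) with hB
    have hnA : 0 ≤ ‖A‖ := norm_nonneg _
    have hnB : 0 ≤ ‖B‖ := norm_nonneg _
    have hn : ‖u.re • A + u.im • B‖ ≤ ‖A‖ + ‖B‖ := by
      refine (norm_add_le _ _).trans ?_
      rw [norm_smul, norm_smul, Real.norm_eq_abs, Real.norm_eq_abs]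
      nlinarith [abs_nonneg u.re, abs_nonneg u.im]
    refine hn.trans ?_
    have : C * (Real.log (Real.log (1/t)) ^ N * P) / (t * Real.log (1/t))
        + C * (Real.log (Real.log (1/t)) ^ N * P) / (t * Real.log (1/t))
        = 2 * C * P * Real.log (Real.log (1/t)) ^ N / (t * Real.log (1/t)) := by ring
    linarith [h1, h2]
  set K : ℝ := 2 * C * P / (N+1) with hK_def
  have hK0 : 0 ≤ K := by positivity
  set H : ℝ → ℝ := fun t => Real.log (Real.log (1/t)) ^ (N+1) with hH_def
  have hBder : ∀ t ∈ Set.Icc a b,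
      HasDerivAt (fun s => K * (H a - H s))
        (2 * C * P * Real.log (Real.log (1/t)) ^ N / (t * Real.log (1/t))) t := by
    intro t ht
    have ht0 : 0 < t := lt_of_lt_of_le ha0 ht.1
    have hte : t < Real.exp (-1) := lt_of_le_of_lt ht.2 hb1
    have h := ((hasDerivAt_loglog_pow N ht0 hte).const_sub (H a)).const_mul K
    refine h.congr_deriv ?_
    have h4 : Real.log (1/t) ≠ 0 := by
      have := log_one_div_gt_one ht0 hte; linarith
    rw [hK_def]
    have hN1 : (N:ℝ) + 1 ≠ 0 := by positivity
    field_simp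
  have main := image_norm_le_of_norm_deriv_right_le_deriv_boundary'
      (f := fun t => f (z t) - f (z a))
      (f' := fun t => (fderiv ℝ f (z t)) (Pi.single k u))
      (a := a) (b := b)
      (fun t ht => (((hg' t ht).continuousAt).continuousWithinAt).sub
        continuousWithinAt_const)
      (fun x hx => (((hg' x (Set.Ico_subset_Icc_self hx)).sub_const _).hasDerivWithinAt))
      (B := fun t => K * (H a - H t))
      (B' := fun t => 2 * C * P * Real.log (Real.log (1/t)) ^ N / (t * Real.log (1/t)))
      (by simp)
      (fun t ht => ((hBder t ht).continuousAt).continuousWithinAt)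
      (fun x hx => (hBder x (Set.Ico_subset_Icc_self hx)).hasDerivWithinAt)
      (fun x hx => hDbound x (Set.Ico_subset_Icc_self hx))
  have hfinal := main (Set.right_mem_Icc.2 hab)
  rw [hza] at hfinal
  have hHb : 0 ≤ H b := pow_nonneg (loglog_pos hb0 hb1).le _
  have : ‖f (z b) - f w‖ ≤ K * H a := by
    refine hfinal.trans ?_
    have : K * (H a - H b) ≤ K * H a := by nlinarith
    linarith
  rw [hzb] at this
  calc ‖f (Function.update w k (((b / a : ℝ):ℂ) * w k)) - f w‖ ≤ K * H a := this
    _ = 2*C/(N+1) * (P * Real.log (Real.log (1/a)) ^ (N+1)) := by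
        rw [hK_def, hH_def]; ring


lemma exists_bound_on_corner (n r : ℕ) (f : (Fin n → ℂ) → ℂ)
    (hdiff : ∀ z ∈ puncturedPolydisc n r, DifferentiableAt ℝ f z)
    (b : ℝ) (hb0 : 0 < b) (hb1 : b < Real.exp (-1)) :
    ∃ M : ℝ, 0 ≤ M ∧ ∀ z : Fin n → ℂ, (∀ j, ‖z j‖ ≤ b) →
      (∀ j : Fin n, (j:ℕ) < r → ‖z j‖ = b) → ‖f z‖ ≤ M := by
  set S : Set (Fin n → ℂ) := {z | (∀ j, ‖z j‖ ≤ b) ∧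
      ∀ j : Fin n, (j:ℕ) < r → ‖z j‖ = b} with hS_def
  have hSsub : S ⊆ puncturedPolydisc n r := by
    intro z hz
    refine ⟨fun j => lt_of_le_of_lt (hz.1 j) hb1, fun j hj h0 => ?_⟩
    have := hz.2 j hj
    rw [h0] at this; simp at this; linarith
  have hA : IsClosed {z : Fin n → ℂ | ∀ j, ‖z j‖ ≤ b} := by
    rw [Set.setOf_forall]
    exact isClosed_iInter fun j =>
      isClosed_le (continuous_norm.comp (continuous_apply j)) continuous_const
  have hB : IsClosed {z : Fin n → ℂ | ∀ j : Fin n, (j:ℕ) < r → ‖z j‖ = b} := by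
    rw [Set.setOf_forall]
    refine isClosed_iInter fun j => ?_
    by_cases hj : (j:ℕ) < r
    · simp only [hj, forall_true_left]
      exact isClosed_eq (continuous_norm.comp (continuous_apply j)) continuous_const
    · simp only [hj, false_implies]
      exact isClosed_univ
  have hclosed : IsClosed S := by
    rw [hS_def, Set.setOf_and]
    exact hA.inter hB
  have hbdd : S ⊆ Metric.closedBall 0 b := by
    intro z hz
    rw [Metric.mem_closedBall, dist_zero_right]
    exact (pi_norm_le_iff_of_nonneg hb0.le).2 fun j => hz.1 j
  have hcompact : IsCompact S :=
    (isCompact_closedBall (0 : Fin n → ℂ) b).of_isClosed_subset hclosed hbdd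
  have hcont : ContinuousOn f S := fun z hz =>
    (hdiff z (hSsub hz)).continuousAt.continuousWithinAt
  obtain ⟨M, hM⟩ := hcompact.exists_bound_of_continuousOn hcont
  refine ⟨max M 0, le_max_right _ _, fun z h1 h2 => ?_⟩
  exact (hM z ⟨h1, h2⟩).trans (le_max_left _ _)
/-- If the real differential of `f` has log-log growth along the normal crossings
divisor `z_1 ⋯ z_r = 0`, then `f` itself has log-log growth, with explicit exponent
`N+1` in the variable being integrated. -/
theorem loglog_growth_of_differential
    (n r : ℕ) (hr1 : 1 ≤ r) (hrn : r ≤ n) (N : ℕ) (C : ℝ) (hC : 0 < C)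
    (f : (Fin n → ℂ) → ℂ)
    (hdiff : ∀ z ∈ puncturedPolydisc n r, DifferentiableAt ℝ f z)
    (hbound₁ : ∀ z ∈ puncturedPolydisc n r, ∀ k : Fin n, (k : ℕ) < r →
      ∀ v : Fin n → ℂ, v = Pi.single k 1 ∨ v = Pi.single k Complex.I →
        ‖fderiv ℝ f z v‖ ≤
          C * (∏ j ∈ univ.filter (fun j : Fin n => (j : ℕ) < r),
                (Real.log (Real.log (1 / ‖z j‖))) ^ N) /
            (‖z k‖ * Real.log (1 / ‖z k‖)))
    (hbound₂ : ∀ z ∈ puncturedPolydisc n r, ∀ k : Fin n, r ≤ (k : ℕ) →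
      ∀ v : Fin n → ℂ, v = Pi.single k 1 ∨ v = Pi.single k Complex.I →
        ‖fderiv ℝ f z v‖ ≤
          C * ∏ j ∈ univ.filter (fun j : Fin n => (j : ℕ) < r),
                (Real.log (Real.log (1 / ‖z j‖))) ^ N) :
    ∀ ε : ℝ, 0 < ε → ε < 1 → ∃ C' : ℝ, 0 < C' ∧
      ∀ w ∈ puncturedPolydisc n r, (∀ k, ‖w k‖ ≤ ε * Real.exp (-1)) →
        ‖f w‖ ≤
          C' * ∑ i ∈ univ.filter (fun i : Fin n => (i : ℕ) < r),
            (Real.log (Real.log (1 / ‖w i‖))) ^ (N + 1) *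
              ∏ j ∈ univ.filter (fun j : Fin n => (i : ℕ) < (j : ℕ) ∧ (j : ℕ) < r),
                (Real.log (Real.log (1 / ‖w j‖))) ^ N := by
  intro ε hε0 hε1
  set b : ℝ := ε * Real.exp (-1) with hb_def
  have hb0 : 0 < b := by positivity
  have hb1 : b < Real.exp (-1) := by
    rw [hb_def]
    nlinarith [Real.exp_pos (-1 : ℝ)]
  set c : ℝ := Real.log (Real.log (1/b)) with hc_def
  have hc0 : 0 < c := loglog_pos hb0 hb1
  set M1 : ℝ := max c 1 with hM1_def
  have hM1_1 : 1 ≤ M1 := le_max_right _ _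
  have hM1_0 : 0 < M1 := lt_of_lt_of_le one_pos hM1_1
  obtain ⟨M, hM0, hM⟩ := exists_bound_on_corner n r f hdiff b hb0 hb1
  set m1 : ℝ := min c 1 with hm1_def
  have hm10 : 0 < m1 := lt_min hc0 one_pos
  have hm11 : m1 ≤ 1 := min_le_right _ _
  set δ : ℝ := m1 ^ ((N+1) + N*n) with hδ_def
  have hδ0 : 0 < δ := pow_pos hm10 _
  set K1 : ℝ := (2*C/(N+1)) * M1 ^ (N*n) with hK1_def
  have hK10 : 0 < K1 := by positivity
  refine ⟨M/δ + K1, by positivity, ?_⟩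
  intro w hw hwb
  -- pushed points
  set p : ℕ → (Fin n → ℂ) := fun m j =>
    if (j:ℕ) < min m r then ((b / ‖w j‖ : ℝ) : ℂ) * w j else w j with hp_def
  have hwj0 : ∀ j : Fin n, (j:ℕ) < r → 0 < ‖w j‖ :=
    fun j hj => norm_pos_iff.2 (hw.2 j hj)
  have hp_abs : ∀ m : ℕ, ∀ j : Fin n,
      ‖p m j‖ = if (j:ℕ) < min m r then b else ‖w j‖ := by
    intro m j
    simp only [hp_def]
    by_cases h : (j:ℕ) < min m r
    · rw [if_pos h, if_pos h, norm_mul, Complex.norm_real, Real.norm_eq_abs,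
        abs_of_nonneg (div_nonneg hb0.le (norm_nonneg _)),
        div_mul_cancel₀]
      exact (hwj0 j (lt_of_lt_of_le h (min_le_right _ _))).ne'
    · rw [if_neg h, if_neg h]
  have hp_le : ∀ m : ℕ, ∀ j : Fin n, ‖p m j‖ ≤ b := by
    intro m j
    rw [hp_abs]
    by_cases h : (j:ℕ) < min m r
    · rw [if_pos h]
    · rw [if_neg h]; exact hwb j
  have hp_mem : ∀ m : ℕ, p m ∈ puncturedPolydisc n r := by
    intro m
    constructor
    · intro j; exact lt_of_le_of_lt (hp_le m j) hb1
    · intro j hj h0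
      have := hp_abs m j
      rw [h0, norm_zero] at this
      by_cases h : (j:ℕ) < min m r
      · rw [if_pos h] at this; linarith
      · rw [if_neg h] at this; exact (hwj0 j hj).ne this
  have hp0 : p 0 = w := by
    funext j; simp only [hp_def]; simp
  have hpstep : ∀ m : ℕ, (hm : m < r) → p (m+1) =
      Function.update (p m) (⟨m, lt_of_lt_of_le hm hrn⟩ : Fin n)
        (((b / ‖p m ⟨m, lt_of_lt_of_le hm hrn⟩‖ : ℝ) : ℂ)
          * p m ⟨m, lt_of_lt_of_le hm hrn⟩) := by
    intro m hm
    set k : Fin n := ⟨m, lt_of_lt_of_le hm hrn⟩ with hk_def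
    have hkv : (k:ℕ) = m := rfl
    funext j
    rcases eq_or_ne j k with heq | hj
    · rw [heq, Function.update_self]
      have h1 : ¬ ((k:ℕ) < min m r) := by rw [hkv]; omega
      have h2 : (k:ℕ) < min (m+1) r := by rw [hkv]; omega
      have hpmj : p m k = w k := by simp only [hp_def, if_neg h1]
      rw [hpmj]
      simp only [hp_def, if_pos h2]
    · rw [Function.update_of_ne hj]
      have hiff : ((j:ℕ) < min (m+1) r) ↔ ((j:ℕ) < min m r) := by
        have : (j:ℕ) ≠ m := fun h => hj (Fin.ext h)
        omega
      simp only [hp_def, hiff]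
  -- the increments
  set E : ℕ → ℝ := fun i =>
    if h : i < r then
      (2*C/(N+1)) * ((∏ j ∈ univ.filter (fun j : Fin n =>
          (j:ℕ) < r ∧ j ≠ (⟨i, lt_of_lt_of_le h hrn⟩ : Fin n)),
          Real.log (Real.log (1/‖p i j‖)) ^ N) *
        Real.log (Real.log (1/‖p i (⟨i, lt_of_lt_of_le h hrn⟩ : Fin n)‖)) ^ (N+1))
    else 0 with hE_def
  have tele : ∀ m : ℕ, m ≤ r →
      ‖f (p m) - f w‖ ≤ ∑ i ∈ Finset.range m, E i := by
    intro m
    induction m with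
    | zero => intro _; simp [hp0]
    | succ m ih =>
      intro hm
      have hmr : m < r := hm
      have hstep := key_step n r N C hC f hdiff hbound₁ b hb0 hb1 (p m) (hp_mem m)
        (hp_le m) (⟨m, lt_of_lt_of_le hmr hrn⟩ : Fin n) hmr
      rw [← hpstep m hmr] at hstep
      have hEm : ‖f (p (m+1)) - f (p m)‖ ≤ E m := by
        rw [hE_def]
        simp only [dif_pos hmr]
        exact hstep
      calc ‖f (p (m+1)) - f w‖
          ≤ ‖f (p (m+1)) - f (p m)‖ + ‖f (p m) - f w‖ :=
            norm_sub_le_norm_sub_add_norm_sub _ _ _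
        _ ≤ E m + ∑ i ∈ Finset.range m, E i := add_le_add hEm (ih hmr.le)
        _ = ∑ i ∈ Finset.range (m+1), E i := (Finset.sum_range_succ_comm _ _).symm
  -- loglog lower bounds
  have hllb : ∀ j : Fin n, (j:ℕ) < r → c ≤ Real.log (Real.log (1/‖w j‖)) :=
    fun j hj => loglog_anti (hwj0 j hj) (hwb j) hb1
  have hll0 : ∀ j : Fin n, (j:ℕ) < r → 0 < Real.log (Real.log (1/‖w j‖)) :=
    fun j hj => lt_of_lt_of_le hc0 (hllb j hj)
  -- the target terms
  set T : Fin n → ℝ := fun i =>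
    Real.log (Real.log (1/‖w i‖)) ^ (N+1) *
      ∏ j ∈ univ.filter (fun j : Fin n => (i:ℕ) < (j:ℕ) ∧ (j:ℕ) < r),
        Real.log (Real.log (1/‖w j‖)) ^ N with hT_def
  have hTnn : ∀ i : Fin n, (i:ℕ) < r → 0 ≤ T i := by
    intro i hi
    rw [hT_def]
    refine mul_nonneg (pow_nonneg (hll0 i hi).le _) (Finset.prod_nonneg fun j hj => ?_)
    simp only [Finset.mem_filter] at hj
    exact pow_nonneg (hll0 j hj.2.2).le _
  -- E i ≤ K1 * T ⟨i,_⟩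
  have hET : ∀ i : ℕ, (hi : i < r) → E i ≤ K1 * T ⟨i, lt_of_lt_of_le hi hrn⟩ := by
    intro i hi
    set k : Fin n := ⟨i, lt_of_lt_of_le hi hrn⟩ with hk_def
    rw [hE_def]
    simp only [dif_pos hi]
    have hpik : p i k = w k := by
      have hkv : (k:ℕ) = i := rfl
      have hni : ¬ ((k:ℕ) < min i r) := by rw [hkv]; omega
      simp only [hp_def, if_neg hni]
    rw [hpik]
    set S : Finset (Fin n) := univ.filter (fun j : Fin n => (j:ℕ) < r ∧ j ≠ k) with hS_def
    have hsplitS := Finset.prod_filter_mul_prod_filter_not S (fun j : Fin n => (j:ℕ) < i)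
      (fun j => Real.log (Real.log (1/‖p i j‖)) ^ N)
    have hfirst : ∀ j ∈ S.filter (fun j : Fin n => (j:ℕ) < i),
        Real.log (Real.log (1/‖p i j‖)) ^ N = c ^ N := by
      intro j hj
      simp only [hS_def, Finset.mem_filter, Finset.mem_univ, true_and] at hj
      have : (j:ℕ) < min i r := by omega
      rw [hp_abs, if_pos this, hc_def]
    have hsecond_set : S.filter (fun j : Fin n => ¬ (j:ℕ) < i)
        = univ.filter (fun j : Fin n => (i:ℕ) < (j:ℕ) ∧ (j:ℕ) < r) := by
      ext j
      simp only [hS_def, Finset.mem_filter, Finset.mem_univ, true_and, hk_def, ne_eq,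
        Fin.ext_iff]
      constructor
      · rintro ⟨⟨h1, h2⟩, h3⟩; exact ⟨by omega, h1⟩
      · rintro ⟨h1, h2⟩; exact ⟨⟨h2, by omega⟩, by omega⟩
    have hsecond : ∀ j ∈ univ.filter (fun j : Fin n => (i:ℕ) < (j:ℕ) ∧ (j:ℕ) < r),
        Real.log (Real.log (1/‖p i j‖)) ^ N
          = Real.log (Real.log (1/‖w j‖)) ^ N := by
      intro j hj
      simp only [Finset.mem_filter, Finset.mem_univ, true_and] at hj
      have : ¬ ((j:ℕ) < min i r) := by omega
      rw [hp_abs, if_neg this]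
    have hprod : ∏ j ∈ S, Real.log (Real.log (1/‖p i j‖)) ^ N
        = (c ^ N) ^ (S.filter (fun j : Fin n => (j:ℕ) < i)).card *
          ∏ j ∈ univ.filter (fun j : Fin n => (i:ℕ) < (j:ℕ) ∧ (j:ℕ) < r),
            Real.log (Real.log (1/‖w j‖)) ^ N := by
      rw [← hsplitS, Finset.prod_congr rfl hfirst, Finset.prod_const, hsecond_set,
        Finset.prod_congr rfl hsecond]
    have hcard : (S.filter (fun j : Fin n => (j:ℕ) < i)).card ≤ n := by
      calc (S.filter (fun j : Fin n => (j:ℕ) < i)).card ≤ Fintype.card (Fin n) :=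
            Finset.card_le_univ _
        _ = n := Fintype.card_fin n
    have hpow : (c ^ N) ^ (S.filter (fun j : Fin n => (j:ℕ) < i)).card ≤ M1 ^ (N*n) := by
      calc (c ^ N) ^ (S.filter (fun j : Fin n => (j:ℕ) < i)).card
          ≤ (M1 ^ N) ^ (S.filter (fun j : Fin n => (j:ℕ) < i)).card := by
            apply pow_le_pow_left₀ (pow_nonneg hc0.le N)
            exact pow_le_pow_left₀ hc0.le (le_max_left _ _) N
        _ = M1 ^ (N * (S.filter (fun j : Fin n => (j:ℕ) < i)).card) := by
            rw [← pow_mul]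
        _ ≤ M1 ^ (N * n) := pow_le_pow_right₀ hM1_1 (Nat.mul_le_mul_left N hcard)
    have hQnn : 0 ≤ ∏ j ∈ univ.filter (fun j : Fin n => (i:ℕ) < (j:ℕ) ∧ (j:ℕ) < r),
        Real.log (Real.log (1/‖w j‖)) ^ N := by
      refine Finset.prod_nonneg fun j hj => ?_
      simp only [Finset.mem_filter] at hj
      exact pow_nonneg (hll0 j hj.2.2).le _
    have hLnn : 0 ≤ Real.log (Real.log (1/‖w k‖)) ^ (N+1) :=
      pow_nonneg (hll0 k hi).le _
    rw [hprod, hK1_def, hT_def]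
    have h2C : 0 ≤ 2*C/(N+1) := by positivity
    calc 2*C/(N+1) * ((c ^ N) ^ (S.filter (fun j : Fin n => (j:ℕ) < i)).card *
            (∏ j ∈ univ.filter (fun j : Fin n => (i:ℕ) < (j:ℕ) ∧ (j:ℕ) < r),
              Real.log (Real.log (1/‖w j‖)) ^ N) *
            Real.log (Real.log (1/‖w k‖)) ^ (N+1))
        ≤ 2*C/(N+1) * (M1 ^ (N*n) *
            (∏ j ∈ univ.filter (fun j : Fin n => (i:ℕ) < (j:ℕ) ∧ (j:ℕ) < r),
              Real.log (Real.log (1/‖w j‖)) ^ N) *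
            Real.log (Real.log (1/‖w k‖)) ^ (N+1)) := by
          apply mul_le_mul_of_nonneg_left _ h2C
          apply mul_le_mul_of_nonneg_right _ hLnn
          exact mul_le_mul_of_nonneg_right hpow hQnn
      _ = 2*C/(N+1) * M1 ^ (N*n) *
            (Real.log (Real.log (1/‖w k‖)) ^ (N+1) *
            ∏ j ∈ univ.filter (fun j : Fin n => (i:ℕ) < (j:ℕ) ∧ (j:ℕ) < r),
              Real.log (Real.log (1/‖w j‖)) ^ N) := by ring
  -- sum of T over range r equals the target sum
  set T'' : ℕ → ℝ := fun m => if h : m < n then T ⟨m, h⟩ else 0 with hT''_def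
  have hsum_eq : ∑ i ∈ Finset.range r, T'' i
      = ∑ i ∈ univ.filter (fun i : Fin n => (i:ℕ) < r), T i := by
    have e1 : Finset.range r = (Finset.range n).filter (fun m => m < r) := by
      ext m; simp only [Finset.mem_filter, Finset.mem_range]; omega
    have h2 : ∀ i : Fin n, (if (i:ℕ) < r then T i else 0)
        = (fun m : ℕ => if m < r then T'' m else 0) (i:ℕ) := by
      intro i
      simp only [hT''_def, i.isLt, dif_pos, Fin.eta]
    calc ∑ i ∈ Finset.range r, T'' i
        = ∑ i ∈ (Finset.range n).filter (fun m => m < r), T'' i := by rw [← e1]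
      _ = ∑ i ∈ Finset.range n, (if i < r then T'' i else 0) := Finset.sum_filter _ _
      _ = ∑ i : Fin n, (fun m : ℕ => if m < r then T'' m else 0) (i:ℕ) :=
          (Fin.sum_univ_eq_sum_range (fun m => if m < r then T'' m else 0) n).symm
      _ = ∑ i : Fin n, (if (i:ℕ) < r then T i else 0) :=
          Finset.sum_congr rfl (fun i _ => (h2 i).symm)
      _ = ∑ i ∈ univ.filter (fun i : Fin n => (i:ℕ) < r), T i :=
          (Finset.sum_filter _ _).symm
  -- the main estimate
  set Ssum : ℝ := ∑ i ∈ univ.filter (fun i : Fin n => (i:ℕ) < r), T i with hSsum_def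
  have hTδ : ∀ i : Fin n, (i:ℕ) < r → δ ≤ T i := by
    intro i hi
    rw [hT_def, hδ_def, pow_add]
    have hQ : m1 ^ (N*n) ≤ ∏ j ∈ univ.filter (fun j : Fin n => (i:ℕ) < (j:ℕ) ∧ (j:ℕ) < r),
        Real.log (Real.log (1/‖w j‖)) ^ N := by
      calc m1 ^ (N*n) ≤ m1 ^ (N * (univ.filter
              (fun j : Fin n => (i:ℕ) < (j:ℕ) ∧ (j:ℕ) < r)).card) := by
            apply pow_le_pow_of_le_one hm10.le hm11
            apply Nat.mul_le_mul_left
            calc (univ.filter (fun j : Fin n => (i:ℕ) < (j:ℕ) ∧ (j:ℕ) < r)).card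
                ≤ Fintype.card (Fin n) := Finset.card_le_univ _
              _ = n := Fintype.card_fin n
        _ = ∏ _j ∈ univ.filter (fun j : Fin n => (i:ℕ) < (j:ℕ) ∧ (j:ℕ) < r), m1 ^ N := by
            rw [Finset.prod_const, ← pow_mul]
        _ ≤ _ := by
            refine Finset.prod_le_prod (fun j _ => pow_nonneg hm10.le _) fun j hj => ?_
            simp only [Finset.mem_filter] at hj
            exact pow_le_pow_left₀ hm10.le ((min_le_left _ _).trans (hllb j hj.2.2)) N
    have hL : m1 ^ (N+1) ≤ Real.log (Real.log (1/‖w i‖)) ^ (N+1) :=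
      pow_le_pow_left₀ hm10.le ((min_le_left _ _).trans (hllb i hi)) (N+1)
    calc m1 ^ (N+1) * m1 ^ (N*n) ≤ Real.log (Real.log (1/‖w i‖)) ^ (N+1)
          * m1 ^ (N*n) := mul_le_mul_of_nonneg_right hL (pow_nonneg hm10.le _)
      _ ≤ _ := mul_le_mul_of_nonneg_left hQ (pow_nonneg (hll0 i hi).le _)
  have hSδ : δ ≤ Ssum := by
    have h0n : 0 < n := lt_of_lt_of_le hr1 hrn
    have hi0 : (⟨0, h0n⟩ : Fin n) ∈ univ.filter (fun i : Fin n => (i:ℕ) < r) := by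
      simp only [Finset.mem_filter, Finset.mem_univ, true_and]
      exact hr1
    calc δ ≤ T ⟨0, h0n⟩ := hTδ _ hr1
      _ ≤ Ssum := Finset.single_le_sum (fun i hi => by
          simp only [Finset.mem_filter] at hi
          exact hTnn i hi.2) hi0
  have hSnn : 0 ≤ Ssum := hδ0.le.trans hSδ
  -- |f (p r)| ≤ M
  have hfpr : ‖f (p r)‖ ≤ M := by
    refine hM (p r) (hp_le r) fun j hj => ?_
    rw [hp_abs, if_pos (by omega)]
  -- conclude
  have hsumE : ∑ i ∈ Finset.range r, E i ≤ K1 * Ssum := by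
    calc ∑ i ∈ Finset.range r, E i ≤ ∑ i ∈ Finset.range r, K1 * T'' i := by
          refine Finset.sum_le_sum fun i hi => ?_
          rw [Finset.mem_range] at hi
          have := hET i hi
          rw [hT''_def]
          simp only [dif_pos (lt_of_lt_of_le hi hrn)]
          exact this
      _ = K1 * ∑ i ∈ Finset.range r, T'' i := by rw [Finset.mul_sum]
      _ = K1 * Ssum := by rw [hsum_eq]
  have htele := tele r le_rfl
  have hfw : ‖f w‖ ≤ M + K1 * Ssum := by
    calc ‖f w‖ = ‖f w - 0‖ := by rw [sub_zero]
      _ ≤ ‖f w - f (p r)‖ + ‖f (p r) - 0‖ :=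
          norm_sub_le_norm_sub_add_norm_sub _ _ _
      _ = ‖f (p r) - f w‖ + ‖f (p r)‖ := by
          rw [norm_sub_rev, sub_zero]
      _ ≤ (K1 * Ssum) + M := add_le_add (htele.trans hsumE) hfpr
      _ = M + K1 * Ssum := by ring
  have hMδ : M ≤ M/δ * Ssum := by
    rw [div_mul_eq_mul_div, le_div_iff₀ hδ0]
    exact mul_le_mul_of_nonneg_left hSδ hM0
  calc ‖f w‖ ≤ M + K1 * Ssum := hfw
    _ ≤ M/δ * Ssum + K1 * Ssum := add_le_add hMδ le_rfl
    _ = (M/δ + K1) * Ssum := by ring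
end

section
/- Let (α, μ) be a measure space with μ a probability measure, let K be a natural number, and let g : α → ℝ be μ-integrable with g(x) ≥ e^e for μ-almost every x. Then ∫ (log g(x))^K dμ(x) ≤ (2K+2)^K · (log(∫ g dμ))^K. -/
open MeasureTheory

/-- Jensen-inequality step concluding the height-integral bound: for a probability
measure `μ` and integrable `g ≥ e^e` a.e., one has
`∫ (log g)^K dμ ≤ (2K+2)^K (log ∫ g dμ)^K`. -/
theorem integral_log_pow_le {α : Type*} [MeasurableSpace α]
    (μ : Measure α) [IsProbabilityMeasure μ] (K : ℕ)
    (g : α → ℝ) (hg : Integrable g μ)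
    (hge : ∀ᵐ x ∂μ, Real.exp (Real.exp 1) ≤ g x) :
    ∫ x, (Real.log (g x)) ^ K ∂μ ≤
      ((2 * K + 2 : ℝ)) ^ K * (Real.log (∫ x, g x ∂μ)) ^ K := by
  rcases Nat.eq_zero_or_pos K with hK | hK
  · subst hK; simp
  have hK1 : (1 : ℝ) ≤ (K : ℝ) := by exact_mod_cast hK
  have hKpos : (0 : ℝ) < (K : ℝ) := by linarith
  have hKne : (K : ℝ) ≠ 0 := ne_of_gt hKpos
  have he1 : (2 : ℝ) ≤ Real.exp 1 := by
    have := Real.add_one_le_exp (1 : ℝ); linarith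
  have hI : Real.exp (Real.exp 1) ≤ ∫ x, g x ∂μ := by
    calc Real.exp (Real.exp 1) = ∫ _, Real.exp (Real.exp 1) ∂μ := by simp
    _ ≤ ∫ x, g x ∂μ := integral_mono_ae (integrable_const _) hg hge
  have hIpos : 0 < ∫ x, g x ∂μ := lt_of_lt_of_le (Real.exp_pos _) hI
  set m := Real.log (∫ x, g x ∂μ) with hm_def
  have hm : Real.exp 1 ≤ m := by
    have h := Real.log_le_log (Real.exp_pos _) hI
    simpa [hm_def] using h
  have hm1 : (1 : ℝ) ≤ m := by linarith
  have hm0 : (0 : ℝ) ≤ m := by linarith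
  have hexpm : Real.exp m = ∫ x, g x ∂μ := Real.exp_log hIpos
  -- pointwise a.e. bound
  have key : ∀ᵐ x ∂μ, Real.log (g x) ^ K ≤
      (2 * (K : ℝ) * m) ^ K + (2 * (K : ℝ)) ^ K * Real.exp (-((K : ℝ) * m)) * g x := by
    filter_upwards [hge] with x hx
    set u := Real.log (g x) with hu
    have hgx : 0 < g x := lt_of_lt_of_le (Real.exp_pos _) hx
    have hue : Real.exp 1 ≤ u := by
      have h := Real.log_le_log (Real.exp_pos _) hx
      simpa [hu] using h
    have hu0 : 0 ≤ u := by have := Real.exp_pos (1 : ℝ); linarith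
    have hnn : 0 ≤ (2 * (K : ℝ)) ^ K * Real.exp (-((K : ℝ) * m)) * g x := by positivity
    rcases le_or_gt u (2 * (K : ℝ) * m) with h | h
    · have hp : u ^ K ≤ (2 * (K : ℝ) * m) ^ K := pow_le_pow_left₀ hu0 h K
      linarith
    · have h2K : (0 : ℝ) < 2 * (K : ℝ) := by linarith
      have hv : u ≤ 2 * (K : ℝ) * Real.exp (u / (2 * (K : ℝ))) := by
        have h1 := Real.add_one_le_exp (u / (2 * (K : ℝ)))
        have h2 : u / (2 * (K : ℝ)) ≤ Real.exp (u / (2 * (K : ℝ))) := by linarith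
        calc u = 2 * (K : ℝ) * (u / (2 * (K : ℝ))) := by field_simp
        _ ≤ 2 * (K : ℝ) * Real.exp (u / (2 * (K : ℝ))) :=
          mul_le_mul_of_nonneg_left h2 (le_of_lt h2K)
      have hpow : u ^ K ≤ (2 * (K : ℝ)) ^ K * Real.exp (u / 2) := by
        calc u ^ K ≤ (2 * (K : ℝ) * Real.exp (u / (2 * (K : ℝ)))) ^ K :=
          pow_le_pow_left₀ hu0 hv K
        _ = (2 * (K : ℝ)) ^ K * Real.exp (u / (2 * (K : ℝ))) ^ K := mul_pow _ _ _
        _ = (2 * (K : ℝ)) ^ K * Real.exp (u / 2) := by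
            rw [← Real.exp_nat_mul]
            congr 1
            field_simp
      have hhalf : Real.exp (u / 2) ≤ Real.exp (-((K : ℝ) * m)) * g x := by
        have hgx' : Real.exp u = g x := Real.exp_log hgx
        have h3 : u / 2 ≤ u - (K : ℝ) * m := by nlinarith
        calc Real.exp (u / 2) ≤ Real.exp (u - (K : ℝ) * m) := Real.exp_le_exp.mpr h3
        _ = Real.exp (-((K : ℝ) * m)) * Real.exp u := by
            rw [← Real.exp_add]; ring_nf
        _ = Real.exp (-((K : ℝ) * m)) * g x := by rw [hgx']
      have hA : (0 : ℝ) ≤ (2 * (K : ℝ)) ^ K := by positivity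
      have hB : (0 : ℝ) ≤ (2 * (K : ℝ) * m) ^ K := by positivity
      have h4 : (2 * (K : ℝ)) ^ K * Real.exp (u / 2) ≤
          (2 * (K : ℝ)) ^ K * (Real.exp (-((K : ℝ) * m)) * g x) :=
        mul_le_mul_of_nonneg_left hhalf hA
      calc u ^ K ≤ (2 * (K : ℝ)) ^ K * Real.exp (u / 2) := hpow
      _ ≤ (2 * (K : ℝ)) ^ K * (Real.exp (-((K : ℝ) * m)) * g x) := h4
      _ ≤ (2 * (K : ℝ) * m) ^ K + (2 * (K : ℝ)) ^ K * Real.exp (-((K : ℝ) * m)) * g x := by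
          linarith [hB, mul_assoc ((2 * (K : ℝ)) ^ K) (Real.exp (-((K : ℝ) * m))) (g x)]
  have hbound : Integrable
      (fun x => (2 * (K : ℝ) * m) ^ K + (2 * (K : ℝ)) ^ K * Real.exp (-((K : ℝ) * m)) * g x) μ :=
    (integrable_const _).add (hg.const_mul _)
  have hintlog : Integrable (fun x => Real.log (g x) ^ K) μ := by
    apply Integrable.mono' hbound
    · exact ((Real.measurable_log.comp_aemeasurable hg.aemeasurable).pow_const K).aestronglyMeasurable
    · filter_upwards [key, hge] with x hkey hx
      have hgx : 0 < g x := lt_of_lt_of_le (Real.exp_pos _) hx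
      have hu0 : 0 ≤ Real.log (g x) := by
        have h := Real.log_le_log (Real.exp_pos _) hx
        have := Real.exp_pos (1 : ℝ)
        simp only [Real.log_exp] at h
        linarith
      rw [Real.norm_eq_abs, abs_of_nonneg (pow_nonneg hu0 K)]
      exact hkey
  have step1 : ∫ x, Real.log (g x) ^ K ∂μ ≤
      (2 * (K : ℝ) * m) ^ K + (2 * (K : ℝ)) ^ K * Real.exp (-((K : ℝ) * m)) * (∫ x, g x ∂μ) := by
    calc ∫ x, Real.log (g x) ^ K ∂μ
        ≤ ∫ x, ((2 * (K : ℝ) * m) ^ K + (2 * (K : ℝ)) ^ K * Real.exp (-((K : ℝ) * m)) * g x) ∂μ :=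
          integral_mono_ae hintlog hbound key
    _ = (2 * (K : ℝ) * m) ^ K + (2 * (K : ℝ)) ^ K * Real.exp (-((K : ℝ) * m)) * (∫ x, g x ∂μ) := by
        rw [integral_add (integrable_const _) (hg.const_mul _), integral_const, integral_const_mul]
        simp
  -- arithmetic conclusion
  have hA : (0 : ℝ) ≤ (2 * (K : ℝ)) ^ K := by positivity
  have htail : Real.exp (-((K : ℝ) * m)) * (∫ x, g x ∂μ) ≤ 1 := by
    rw [← hexpm, ← Real.exp_add]
    apply Real.exp_le_one_iff.mpr
    nlinarith
  have hmK : (1 : ℝ) ≤ m ^ K := by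
    calc (1:ℝ) = 1 ^ K := (one_pow K).symm
    _ ≤ m ^ K := pow_le_pow_left₀ zero_le_one hm1 K
  have hstep2 : ∫ x, Real.log (g x) ^ K ∂μ ≤ 2 * (2 * (K : ℝ)) ^ K * m ^ K := by
    have h1 : (2 * (K : ℝ) * m) ^ K = (2 * (K : ℝ)) ^ K * m ^ K := mul_pow _ _ _
    have h2 : (2 * (K : ℝ)) ^ K * (Real.exp (-((K : ℝ) * m)) * (∫ x, g x ∂μ)) ≤
        (2 * (K : ℝ)) ^ K * 1 := mul_le_mul_of_nonneg_left htail hA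
    have h3 : (2 * (K : ℝ)) ^ K ≤ (2 * (K : ℝ)) ^ K * m ^ K := by nlinarith
    have h4 := step1
    rw [h1] at h4
    nlinarith [mul_assoc ((2 * (K : ℝ)) ^ K) (Real.exp (-((K : ℝ) * m))) (∫ x, g x ∂μ)]
  have hbern : (2 : ℝ) ≤ (1 + (K : ℝ)⁻¹) ^ K := by
    have hKi : (0:ℝ) ≤ (K : ℝ)⁻¹ := by positivity
    have h := one_add_mul_le_pow (by linarith : (-2:ℝ) ≤ (K : ℝ)⁻¹) K
    have hcancel : (K : ℝ) * (K : ℝ)⁻¹ = 1 := mul_inv_cancel₀ hKne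
    nlinarith
  have hfin : 2 * (2 * (K : ℝ)) ^ K * m ^ K ≤ ((2 * (K : ℝ) + 2)) ^ K * m ^ K := by
    have h1 : ((2 * (K : ℝ) + 2)) = (2 * (K : ℝ)) * (1 + (K : ℝ)⁻¹) := by
      field_simp
    rw [h1, mul_pow (2 * (K : ℝ)) (1 + (K : ℝ)⁻¹) K]
    have hM : (0 : ℝ) ≤ m ^ K := by positivity
    nlinarith [mul_le_mul_of_nonneg_right hbern (mul_nonneg hA hM)]
  calc ∫ x, Real.log (g x) ^ K ∂μ ≤ 2 * (2 * (K : ℝ)) ^ K * m ^ K := hstep2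
  _ ≤ ((2 * (K : ℝ) + 2)) ^ K * m ^ K := hfin
end
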